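/- (Theorem 5, main result.) Assume the avoidance hypothesis. Then the topological frontier (boundary) of the remainder set S = {g(u) : u ∈ ℝ², ‖u‖ ≤ 1} is contained in the image of the unit sphere, i.e. frontier S ⊆ {g(u) : u ∈ ℝ², ‖u‖ = 1}. -/

import Mathlib

noncomputable section

/-- Matrix–vector multiplication, viewed as a map on the Euclidean plane. -/
def mv (M : Matrix (Fin 2) (Fin 2) ℝ) (u : EuclideanSpace ℝ (Fin 2)) :
    EuclideanSpace ℝ (Fin 2) := WithLp.toLp 2 (M.mulVec u)

/-- Range `r(p) = √((p₁−a)² + (p₂−b)²)` to the sensor located at `(a, b)`. -/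
def rr (a b : ℝ) (p : EuclideanSpace ℝ (Fin 2)) : ℝ :=
  Real.sqrt ((p 0 - a) ^ 2 + (p 1 - b) ^ 2)

/-- Bearing `θ(p)`: polar angle in `(−π, π]` of the complex number `(p₁−a) + i(p₂−b)`. -/
def theta (a b : ℝ) (p : EuclideanSpace ℝ (Fin 2)) : ℝ :=
  Complex.arg ⟨p 0 - a, p 1 - b⟩

/-- Jacobian matrix of the range–bearing measurement map at `p`. -/
def Jh (a b : ℝ) (p : EuclideanSpace ℝ (Fin 2)) : Matrix (Fin 2) (Fin 2) ℝ :=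
  !![(p 0 - a) / rr a b p, (p 1 - b) / rr a b p;
     -(p 1 - b) / (rr a b p) ^ 2, (p 0 - a) / (rr a b p) ^ 2]

/-- The range–bearing measurement map `h(p) = (r(p), θ(p))`. -/
def hMeas (a b : ℝ) (p : EuclideanSpace ℝ (Fin 2)) : EuclideanSpace ℝ (Fin 2) :=
  WithLp.toLp 2 ![rr a b p, theta a b p]

/-- The linearization remainder `g(u) = h(x + Eu) − h(x) − J_h(x)·(Eu)`. -/
def gRem (a b : ℝ) (x : EuclideanSpace ℝ (Fin 2)) (E : Matrix (Fin 2) (Fin 2) ℝ)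
    (u : EuclideanSpace ℝ (Fin 2)) : EuclideanSpace ℝ (Fin 2) :=
  hMeas a b (x + mv E u) - hMeas a b x - mv (Jh a b x) (mv E u)

namespace Thm5

abbrev V := EuclideanSpace ℝ (Fin 2)

/-- projection CLM -/
def pr (i : Fin 2) : V →L[ℝ] ℝ := PiLp.proj 2 (fun _ : Fin 2 => ℝ) i

@[simp] lemma pr_apply (i : Fin 2) (u : V) : pr i u = u i := rfl

/-- mv as CLM -/
def mvL (M : Matrix (Fin 2) (Fin 2) ℝ) : V →L[ℝ] V :=
  LinearMap.toContinuousLinearMap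
    ((WithLp.linearEquiv 2 ℝ (Fin 2 → ℝ)).symm.toLinearMap ∘ₗ
      M.mulVecLin ∘ₗ (WithLp.linearEquiv 2 ℝ (Fin 2 → ℝ)).toLinearMap)

lemma mvL_apply (M : Matrix (Fin 2) (Fin 2) ℝ) (u : V) : mvL M u = mv M u := rfl

lemma mv_apply (M : Matrix (Fin 2) (Fin 2) ℝ) (u : V) (i : Fin 2) :
    mv M u i = M i 0 * u 0 + M i 1 * u 1 := by
  simp [mv, Matrix.mulVec, dotProduct, Fin.sum_univ_two]
  fin_cases i <;> simp

@[simp] lemma mv_zero (M : Matrix (Fin 2) (Fin 2) ℝ) : mv M 0 = 0 := by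
  ext i; simp [mv_apply]

/-- complex coordinate -/
def zc (a b : ℝ) (p : V) : ℂ := ⟨p 0 - a, p 1 - b⟩

lemma theta_eq (a b : ℝ) (p : V) : theta a b p = (zc a b p).arg := rfl

lemma rr_sq (a b : ℝ) (p : V) : rr a b p ^ 2 = (p 0 - a) ^ 2 + (p 1 - b) ^ 2 := by
  rw [rr, Real.sq_sqrt] ; positivity

lemma rr_nonneg (a b : ℝ) (p : V) : 0 ≤ rr a b p := Real.sqrt_nonneg _

lemma rr_pos (a b : ℝ) (p : V) (h : zc a b p ≠ 0) : 0 < rr a b p := by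
  rcases (rr_nonneg a b p).lt_or_eq with h1 | h1
  · exact h1
  · exfalso
    have h2 := rr_sq a b p
    rw [← h1] at h2
    apply h
    rw [Complex.ext_iff]
    constructor <;> [skip; skip] <;> simp [zc] <;> nlinarith [sq_nonneg (p 0 - a), sq_nonneg (p 1 - b)]

lemma hMeas_apply0 (a b : ℝ) (p : V) : hMeas a b p 0 = rr a b p := rfl
lemma hMeas_apply1 (a b : ℝ) (p : V) : hMeas a b p 1 = theta a b p := rfl

end Thm5

namespace Thm5

lemma mv_E_apply (E : Matrix (Fin 2) (Fin 2) ℝ) (x u : V) (i : Fin 2) :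
    mv E u i = (x + mv E u) i - x i := by
  simp [PiLp.add_apply]

lemma gRem_apply0 (a b : ℝ) (x : V) (E : Matrix (Fin 2) (Fin 2) ℝ) (u : V) :
    gRem a b x E u 0 = rr a b (x + mv E u) - rr a b x -
      ((x 0 - a) / rr a b x * ((x + mv E u) 0 - x 0)
        + (x 1 - b) / rr a b x * ((x + mv E u) 1 - x 1)) := by
  rw [gRem]
  simp only [PiLp.sub_apply, hMeas_apply0, mv_apply, Jh]
  rw [← mv_E_apply E x u 0, ← mv_E_apply E x u 1]
  norm_num [Matrix.cons_val_zero, Matrix.cons_val_one]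
  simp [mv_apply]

lemma gRem_apply1 (a b : ℝ) (x : V) (E : Matrix (Fin 2) (Fin 2) ℝ) (u : V) :
    gRem a b x E u 1 = theta a b (x + mv E u) - theta a b x -
      (-(x 1 - b) / rr a b x ^ 2 * ((x + mv E u) 0 - x 0)
        + (x 0 - a) / rr a b x ^ 2 * ((x + mv E u) 1 - x 1)) := by
  rw [gRem]
  simp only [PiLp.sub_apply, hMeas_apply1, mv_apply, Jh]
  rw [← mv_E_apply E x u 0, ← mv_E_apply E x u 1]
  norm_num [Matrix.cons_val_zero, Matrix.cons_val_one]
  simp [mv_apply]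

lemma scalar_w (v0 v1 w0 w1 s r : ℝ) (hs : 0 < s)
    (s2 : s ^ 2 = v0 ^ 2 + v1 ^ 2) (r2 : r ^ 2 = w0 ^ 2 + w1 ^ 2)
    (hvw : v0 * w0 + v1 * w1 = s * r) :
    s * w0 = r * v0 ∧ s * w1 = r * v1 := by
  have hcross : v0 * w1 - v1 * w0 = 0 := by
    have h0 : (v0 * w1 - v1 * w0) ^ 2 = 0 := by
      linear_combination (-(v0^2+v1^2))*r2 + (-(r^2))*s2 + (-(v0*w0+v1*w1 + s*r))*hvw
    exact pow_eq_zero_iff (n := 2) (by norm_num) |>.mp h0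
  constructor
  · apply mul_left_cancel₀ (ne_of_gt hs)
    linear_combination v0*hvw - v1*hcross + w0*s2
  · apply mul_left_cancel₀ (ne_of_gt hs)
    linear_combination v1*hvw + v0*hcross + w1*s2

lemma scalar_div (v0 w0 s r : ℝ) (hs : 0 < s) (hw : s * w0 = r * v0) : w0 = r / s * v0 := by
  field_simp
  linear_combination hw

lemma scalar0 (v0 v1 w0 w1 s r : ℝ) (hs : 0 < s)
    (hvw : v0 * w0 + v1 * w1 = s * r) (s2 : s ^ 2 = v0 ^ 2 + v1 ^ 2) :
    r - s - (v0 / s * (w0 - v0) + v1 / s * (w1 - v1)) = 0 := by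
  field_simp
  linear_combination -hvw - s2

lemma scalar1 (v0 v1 w0 w1 s t : ℝ) (hs : 0 < s)
    (hcross : v0 * w1 - v1 * w0 = 0) :
    t - t - (-v1 / s ^ 2 * (w0 - v0) + v0 / s ^ 2 * (w1 - v1)) = 0 := by
  field_simp
  linear_combination -hcross

lemma gRem_eq_zero (a b : ℝ) (x : V) (E : Matrix (Fin 2) (Fin 2) ℝ) (u : V)
    (hx : zc a b x ≠ 0) (hp : zc a b (x + mv E u) ≠ 0)
    (hvw : (x 0 - a) * ((x + mv E u) 0 - a) + (x 1 - b) * ((x + mv E u) 1 - b)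
      = rr a b x * rr a b (x + mv E u)) :
    gRem a b x E u = 0 := by
  have hs : 0 < rr a b x := rr_pos a b x hx
  have hr : 0 < rr a b (x + mv E u) := rr_pos a b (x + mv E u) hp
  have s2 := rr_sq a b x
  have r2 := rr_sq a b (x + mv E u)
  obtain ⟨hw0, hw1⟩ := scalar_w (x 0 - a) (x 1 - b) ((x + mv E u) 0 - a) ((x + mv E u) 1 - b)
    (rr a b x) (rr a b (x + mv E u)) hs s2 r2 hvw
  have hcross : (x 0 - a) * ((x + mv E u) 1 - b) - (x 1 - b) * ((x + mv E u) 0 - a) = 0 := by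
    have h0 : ((x 0 - a) * ((x + mv E u) 1 - b) - (x 1 - b) * ((x + mv E u) 0 - a)) ^ 2 = 0 := by
      linear_combination (-((x 0 - a)^2+(x 1 - b)^2))*r2 + (-((rr a b (x + mv E u))^2))*s2 +
        (-((x 0 - a) * ((x + mv E u) 0 - a) + (x 1 - b) * ((x + mv E u) 1 - b)
          + rr a b x * rr a b (x + mv E u)))*hvw
    exact pow_eq_zero_iff (n := 2) (by norm_num) |>.mp h0
  have hth : theta a b (x + mv E u) = theta a b x := by
    have hz : zc a b (x + mv E u)
        = ((rr a b (x + mv E u) / rr a b x : ℝ) : ℂ) * zc a b x := by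
      rw [Complex.ext_iff]
      constructor <;>
        simp only [zc, Complex.mul_re, Complex.mul_im, Complex.ofReal_re, Complex.ofReal_im,
          zero_mul, sub_zero, zero_add, add_zero, mul_zero] <;>
        [exact scalar_div _ _ _ _ hs hw0; exact scalar_div _ _ _ _ hs hw1]
    rw [theta_eq, theta_eq, hz, Complex.arg_real_mul _ (by positivity)]
  have hq0 : (x + mv E u) 0 - x 0 = (x + mv E u) 0 - a - (x 0 - a) := by ring
  have hq1 : (x + mv E u) 1 - x 1 = (x + mv E u) 1 - b - (x 1 - b) := by ring
  ext i
  fin_cases i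
  · show gRem a b x E u 0 = 0
    rw [gRem_apply0, hq0, hq1]
    exact scalar0 _ _ _ _ _ _ hs hvw s2
  · show gRem a b x E u 1 = 0
    rw [gRem_apply1, hq0, hq1, hth]
    exact scalar1 _ _ _ _ _ _ hs hcross

end Thm5

namespace Thm5
open Complex

lemma zc_re (a b : ℝ) (p : V) : (zc a b p).re = p 0 - a := rfl
lemma zc_im (a b : ℝ) (p : V) : (zc a b p).im = p 1 - b := rfl

lemma slit_of_avoid (a b : ℝ) (p : V) (h : ¬(p 0 ≤ a ∧ p 1 = b)) :
    zc a b p ∈ Complex.slitPlane := by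
  rw [Complex.mem_slitPlane_iff]
  push_neg at h
  rcases le_or_gt (p 0) a with h1 | h1
  · exact Or.inr (sub_ne_zero.2 (h h1))
  · exact Or.inl (by simpa [zc_re] using sub_pos.2 h1)

lemma zc_ne_zero (a b : ℝ) (p : V) (h : zc a b p ∈ Complex.slitPlane) : zc a b p ≠ 0 :=
  Complex.slitPlane_ne_zero h

lemma continuous_rr (a b : ℝ) : Continuous (rr a b) :=
  Real.continuous_sqrt.comp
    ((((pr 0).continuous.sub continuous_const).pow 2).add
      (((pr 1).continuous.sub continuous_const).pow 2))

lemma continuous_zc (a b : ℝ) : Continuous (zc a b) := by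
  have : zc a b = fun p : V =>
      ((p 0 - a : ℝ) : ℂ) + ((p 1 - b : ℝ) : ℂ) * Complex.I := by
    funext p
    rw [zc, Complex.mk_eq_add_mul_I]
  rw [this]
  exact (Complex.continuous_ofReal.comp ((pr 0).continuous.sub continuous_const)).add
    ((Complex.continuous_ofReal.comp ((pr 1).continuous.sub continuous_const)).mul
      continuous_const)

lemma continuousAt_hMeas (a b : ℝ) (p : V) (hz : zc a b p ∈ Complex.slitPlane) :
    ContinuousAt (hMeas a b) p := by
  have hF : ContinuousAt (fun q : V => (![rr a b q, theta a b q] : Fin 2 → ℝ)) p := by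
    apply continuousAt_pi.2
    intro i
    fin_cases i
    · exact (continuous_rr a b).continuousAt
    · exact (Complex.continuousAt_arg hz).comp (continuous_zc a b).continuousAt
  exact ((PiLp.continuousLinearEquiv 2 ℝ (fun _ : Fin 2 => ℝ)).symm.continuous.continuousAt).comp
    hF

lemma continuousOn_gRem (a b : ℝ) (x : V) (E : Matrix (Fin 2) (Fin 2) ℝ)
    (havoid : ∀ u : V, ‖u‖ ≤ 1 → ¬((x + mv E u) 0 ≤ a ∧ (x + mv E u) 1 = b)) :
    ContinuousOn (gRem a b x E) (Metric.closedBall 0 1) := by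
  have hc1 : Continuous fun u : V => x + mv E u :=
    continuous_const.add (mvL E).continuous
  have h1 : ContinuousOn (fun u : V => hMeas a b (x + mv E u)) (Metric.closedBall 0 1) := by
    intro u hu
    apply ContinuousAt.continuousWithinAt
    exact ContinuousAt.comp (f := fun u : V => x + mv E u) (x := u)
      (continuousAt_hMeas a b _
        (slit_of_avoid a b _ (havoid u (by simpa [mem_closedBall_zero_iff] using hu))))
      hc1.continuousAt
  exact (h1.sub continuousOn_const).sub
    (((mvL (Jh a b x)).continuous.comp (mvL E).continuous).continuousOn)

end Thm5

namespace Thm5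
open Complex

lemma zc_ne_iff (a b : ℝ) (p : V) : zc a b p ≠ 0 ↔ ¬(p 0 - a = 0 ∧ p 1 - b = 0) := by
  rw [Ne, Complex.ext_iff]
  simp [zc]

set_option maxHeartbeats 1000000 in
lemma exists_sphere_zero (a b : ℝ) (x : V) (E : Matrix (Fin 2) (Fin 2) ℝ)
    (hE : 0 < E.det) (hx : zc a b x ≠ 0) :
    ∃ u : V, ‖u‖ = 1 ∧ gRem a b x E u = 0 := by
  classical
  set vv : V := WithLp.toLp 2 ![x 0 - a, x 1 - b] with hvv
  have hvv0 : vv 0 = x 0 - a := rfl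
  have hvv1 : vv 1 = x 1 - b := rfl
  have hvvne : vv ≠ 0 := by
    intro h
    rw [zc_ne_iff] at hx
    exact hx ⟨by rw [← hvv0, h]; rfl, by rw [← hvv1, h]; rfl⟩
  have hEunit : IsUnit E.det := (isUnit_iff_ne_zero.2 (ne_of_gt hE))
  set tt : V := mv E⁻¹ vv with htt
  have hEtt : mv E tt = vv := by
    show WithLp.toLp 2 (E.mulVec (Matrix.mulVec E⁻¹ vv)) = vv
    rw [Matrix.mulVec_mulVec, Matrix.mul_nonsing_inv E hEunit, Matrix.one_mulVec]
  have httne : tt ≠ 0 := by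
    intro h
    rw [h] at hEtt
    exact hvvne (by rw [← hEtt, mv_zero])
  set c : ℝ := ‖tt‖⁻¹ with hc
  have hcpos : 0 < c := by
    rw [hc]
    exact inv_pos.2 (norm_pos_iff.2 httne)
  refine ⟨c • tt, ?_, ?_⟩
  · rw [norm_smul, hc]
    simp [norm_inv]
    exact inv_mul_cancel₀ (norm_ne_zero_iff.2 httne)
  · have hmv : mv E (c • tt) = c • vv := by
      show WithLp.toLp 2 (E.mulVec (c • tt)) = c • vv
      rw [Matrix.mulVec_smul]
      exact congrArg (c • ·) hEtt
    have hp0 : (x + mv E (c • tt)) 0 - a = (1 + c) * (x 0 - a) := by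
      rw [PiLp.add_apply, hmv, PiLp.smul_apply, hvv0]
      simp [smul_eq_mul]; ring
    have hp1 : (x + mv E (c • tt)) 1 - b = (1 + c) * (x 1 - b) := by
      rw [PiLp.add_apply, hmv, PiLp.smul_apply, hvv1]
      simp [smul_eq_mul]; ring
    have h1c : (0:ℝ) < 1 + c := by linarith
    have hpne : zc a b (x + mv E (c • tt)) ≠ 0 := by
      rw [zc_ne_iff] at hx ⊢
      rw [hp0, hp1]
      intro ⟨h1, h2⟩
      exact hx ⟨by nlinarith, by nlinarith⟩
    have hrp : rr a b (x + mv E (c • tt)) = (1 + c) * rr a b x := by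
      rw [rr, rr, hp0, hp1]
      rw [show ((1 + c) * (x 0 - a)) ^ 2 + ((1 + c) * (x 1 - b)) ^ 2
        = (1 + c) ^ 2 * ((x 0 - a) ^ 2 + (x 1 - b) ^ 2) by ring]
      rw [Real.sqrt_mul (sq_nonneg _), Real.sqrt_sq h1c.le]
    refine gRem_eq_zero a b x E (c • tt) hx hpne ?_
    rw [hp0, hp1, hrp]
    have s2 := rr_sq a b x
    ring_nf
    nlinarith [s2]

end Thm5

namespace Thm5
open Complex ContinuousLinearMap

def zcL : V →L[ℝ] ℂ := (pr 0).smulRight 1 + (pr 1).smulRight Complex.I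

lemma zcL_apply (u : V) : zcL u = ⟨u 0, u 1⟩ := by
  rw [Complex.ext_iff]
  simp [zcL, Complex.real_smul]

lemma hasStrict_zc (a b : ℝ) (p : V) : HasStrictFDerivAt (zc a b) zcL p := by
  have h : zc a b = fun p : V => zcL p - (⟨a, b⟩ : ℂ) := by
    funext q
    rw [zc, zcL_apply, Complex.ext_iff]
    constructor <;> simp
  rw [h]
  exact zcL.hasStrictFDerivAt.sub_const _

/-- first row of the Jacobian as a CLM -/
def rowR (a b : ℝ) (p : V) : V →L[ℝ] ℝ :=
  ((p 0 - a) / rr a b p) • pr 0 + ((p 1 - b) / rr a b p) • pr 1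

/-- second row of the Jacobian as a CLM -/
def rowT (a b : ℝ) (p : V) : V →L[ℝ] ℝ :=
  (-(p 1 - b) / rr a b p ^ 2) • pr 0 + ((p 0 - a) / rr a b p ^ 2) • pr 1

lemma hasStrict_rr (a b : ℝ) (p : V) (hz : zc a b p ≠ 0) :
    HasStrictFDerivAt (rr a b) (rowR a b p) p := by
  have hr : 0 < rr a b p := rr_pos a b p hz
  have hq0 : (p 0 - a) ^ 2 + (p 1 - b) ^ 2 ≠ 0 := by
    have := rr_sq a b p
    intro h; rw [h] at this
    nlinarith [this, hr]
  have h0 : HasStrictFDerivAt (fun q : V => q 0 - a) (pr 0) p :=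
    (pr 0).hasStrictFDerivAt.sub_const a
  have h1 : HasStrictFDerivAt (fun q : V => q 1 - b) (pr 1) p :=
    (pr 1).hasStrictFDerivAt.sub_const b
  have hsq : HasStrictFDerivAt (fun q : V => (q 0 - a) ^ 2 + (q 1 - b) ^ 2)
      ((2 * (p 0 - a)) • pr 0 + (2 * (p 1 - b)) • pr 1) p := by
    have h00 : HasStrictFDerivAt (fun q : V => (q 0 - a) ^ 2)
        ((2 * (p 0 - a)) • pr 0) p := by
      have hf : (fun q : V => (q 0 - a) ^ 2) = fun q : V => (q 0 - a) * (q 0 - a) := by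
        funext q; ring
      have hd : (2 * (p 0 - a)) • pr 0 = (p 0 - a) • pr 0 + (p 0 - a) • pr 0 := by
        refine ContinuousLinearMap.ext fun u => ?_
        simp
        ring
      rw [hf, hd]
      exact h0.mul h0
    have h11 : HasStrictFDerivAt (fun q : V => (q 1 - b) ^ 2)
        ((2 * (p 1 - b)) • pr 1) p := by
      have hf : (fun q : V => (q 1 - b) ^ 2) = fun q : V => (q 1 - b) * (q 1 - b) := by
        funext q; ring
      have hd : (2 * (p 1 - b)) • pr 1 = (p 1 - b) • pr 1 + (p 1 - b) • pr 1 := by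
        refine ContinuousLinearMap.ext fun u => ?_
        simp
        ring
      rw [hf, hd]
      exact h1.mul h1
    exact h00.add h11
  have hsqrt := (Real.hasStrictDerivAt_sqrt hq0).comp_hasStrictFDerivAt p hsq
  have hd : rowR a b p = (1 / (2 * Real.sqrt ((p 0 - a) ^ 2 + (p 1 - b) ^ 2)))
      • ((2 * (p 0 - a)) • pr 0 + (2 * (p 1 - b)) • pr 1) := by
    refine ContinuousLinearMap.ext fun u => ?_
    have hsr : Real.sqrt ((p 0 - a) ^ 2 + (p 1 - b) ^ 2) = rr a b p := rfl
    simp only [rowR, ContinuousLinearMap.add_apply, ContinuousLinearMap.smul_apply, pr_apply,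
      smul_eq_mul, hsr]
    field_simp
  rw [show rr a b = fun p : V => Real.sqrt ((p 0 - a) ^ 2 + (p 1 - b) ^ 2) from rfl, hd]
  exact hsqrt

lemma hasStrict_theta (a b : ℝ) (p : V) (hz : zc a b p ∈ Complex.slitPlane) :
    HasStrictFDerivAt (theta a b) (rowT a b p) p := by
  have hlog := (Complex.hasStrictFDerivAt_log_real hz).comp p (hasStrict_zc a b p)
  have him := Complex.imCLM.hasStrictFDerivAt.comp p hlog
  have hth : theta a b = fun q : V => (Complex.log (zc a b q)).im := by
    funext q
    rw [theta_eq, Complex.log_im]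
  have hznz : zc a b p ≠ 0 := Complex.slitPlane_ne_zero hz
  have hnsq : Complex.normSq (zc a b p) = rr a b p ^ 2 := by
    rw [Complex.normSq_apply, zc_re, zc_im, rr_sq]
    ring
  have hrpos := rr_pos a b p hznz
  have hrw : Complex.imCLM.comp ((((zc a b p)⁻¹ • (1 : ℂ →L[ℝ] ℂ))).comp zcL) = rowT a b p := by
    refine ContinuousLinearMap.ext fun u => ?_
    have h1 : Complex.imCLM.comp ((((zc a b p)⁻¹ • (1 : ℂ →L[ℝ] ℂ))).comp zcL) u
        = ((zc a b p)⁻¹ * zcL u).im := by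
      simp [smul_eq_mul]
    rw [h1, zcL_apply, Complex.mul_im, Complex.inv_re, Complex.inv_im, hnsq]
    show (zc a b p).re / rr a b p ^ 2 * u 1 + -(zc a b p).im / rr a b p ^ 2 * u 0
      = rowT a b p u
    rw [zc_re, zc_im, rowT]
    simp only [ContinuousLinearMap.add_apply, ContinuousLinearMap.smul_apply, pr_apply,
      smul_eq_mul]
    ring
  rw [hth, ← hrw]
  exact him

lemma hasStrict_hMeas (a b : ℝ) (p : V) (hz : zc a b p ∈ Complex.slitPlane) :
    HasStrictFDerivAt (hMeas a b) (mvL (Jh a b p)) p := by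
  rw [hasStrictFDerivAt_piLp]
  intro i
  fin_cases i
  · show HasStrictFDerivAt (fun q : V => hMeas a b q 0)
      ((PiLp.proj 2 (fun _ : Fin 2 => ℝ) 0).comp (mvL (Jh a b p))) p
    have h : (PiLp.proj 2 (fun _ : Fin 2 => ℝ) 0).comp (mvL (Jh a b p)) = rowR a b p := by
      refine ContinuousLinearMap.ext fun u => ?_
      show mv (Jh a b p) u 0 = rowR a b p u
      rw [mv_apply]
      simp [Jh, rowR]
      try ring
    rw [h]
    exact hasStrict_rr a b p (Complex.slitPlane_ne_zero hz)
  · show HasStrictFDerivAt (fun q : V => hMeas a b q 1)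
      ((PiLp.proj 2 (fun _ : Fin 2 => ℝ) 1).comp (mvL (Jh a b p))) p
    have h : (PiLp.proj 2 (fun _ : Fin 2 => ℝ) 1).comp (mvL (Jh a b p)) = rowT a b p := by
      refine ContinuousLinearMap.ext fun u => ?_
      show mv (Jh a b p) u 1 = rowT a b p u
      rw [mv_apply]
      simp [Jh, rowT]
      try ring
    rw [h]
    exact hasStrict_theta a b p hz

lemma hasStrict_gRem (a b : ℝ) (x : V) (E : Matrix (Fin 2) (Fin 2) ℝ) (u : V)
    (hp : zc a b (x + mv E u) ∈ Complex.slitPlane) :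
    HasStrictFDerivAt (gRem a b x E)
      (mvL ((Jh a b (x + mv E u) - Jh a b x) * E)) u := by
  have h1 : HasStrictFDerivAt (fun w : V => x + mv E w) (mvL E) u :=
    (mvL E).hasStrictFDerivAt.const_add x
  have h2 := (hasStrict_hMeas a b _ hp).comp u h1
  have h3 : HasStrictFDerivAt (fun w : V => mv (Jh a b x) (mv E w))
      ((mvL (Jh a b x)).comp (mvL E)) u :=
    ((mvL (Jh a b x)).comp (mvL E)).hasStrictFDerivAt
  have h4 := (h2.sub_const (hMeas a b x)).sub h3
  have hfun : (fun w : V => (fun w : V => hMeas a b (x + mv E w)) w - hMeas a b x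
      - mv (Jh a b x) (mv E w)) = gRem a b x E := rfl
  have hclm : mvL ((Jh a b (x + mv E u) - Jh a b x) * E)
      = (mvL (Jh a b (x + mv E u))).comp (mvL E) - (mvL (Jh a b x)).comp (mvL E) := by
    refine ContinuousLinearMap.ext fun w => ?_
    rw [ContinuousLinearMap.sub_apply]
    show WithLp.toLp 2 (((Jh a b (x + mv E u) - Jh a b x) * E).mulVec w)
      = WithLp.toLp 2 ((Jh a b (x + mv E u)).mulVec (E.mulVec w) - (Jh a b x).mulVec (E.mulVec w))
    rw [Matrix.sub_mul, Matrix.sub_mulVec, Matrix.mulVec_mulVec, Matrix.mulVec_mulVec]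
  rw [hclm]
  exact h4

lemma cs_le (v0 v1 w0 w1 s r : ℝ) (hs : 0 ≤ s) (hr : 0 ≤ r)
    (s2 : s ^ 2 = v0 ^ 2 + v1 ^ 2) (r2 : r ^ 2 = w0 ^ 2 + w1 ^ 2) :
    v0 * w0 + v1 * w1 ≤ s * r := by
  nlinarith [sq_nonneg (v0 * w1 - v1 * w0), sq_nonneg (v0 * w0 + v1 * w1 - s * r),
    mul_nonneg hs hr, sq_nonneg (v0 * w0 + v1 * w1 + s * r)]

lemma scalar_det (v0 v1 w0 w1 s r : ℝ) (hs : 0 < s) (hr : 0 < r)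
    (s2 : s ^ 2 = v0 ^ 2 + v1 ^ 2) (r2 : r ^ 2 = w0 ^ 2 + w1 ^ 2)
    (hlt : v0 * w0 + v1 * w1 < s * r) :
    0 < (w0 / r - v0 / s) * (w0 / r ^ 2 - v0 / s ^ 2)
      - (w1 / r - v1 / s) * (-w1 / r ^ 2 - -v1 / s ^ 2) := by
  have key : (w0 / r - v0 / s) * (w0 / r ^ 2 - v0 / s ^ 2)
      - (w1 / r - v1 / s) * (-w1 / r ^ 2 - -v1 / s ^ 2)
      = (r + s) * (s * r - (v0 * w0 + v1 * w1)) / (r ^ 2 * s ^ 2) := by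
    field_simp
    linear_combination (-s^3)*r2 + (-r^3)*s2
  rw [key]
  apply div_pos
  · exact mul_pos (by linarith) (by linarith)
  · positivity

lemma det_sub_pos (a b : ℝ) (x p : V) (hx : zc a b x ≠ 0) (hp : zc a b p ≠ 0)
    (hlt : (x 0 - a) * (p 0 - a) + (x 1 - b) * (p 1 - b) < rr a b x * rr a b p) :
    0 < (Jh a b p - Jh a b x).det := by
  have hs := rr_pos a b x hx
  have hr := rr_pos a b p hp
  have s2 := rr_sq a b x
  have r2 := rr_sq a b p
  rw [Matrix.det_fin_two]
  simp only [Matrix.sub_apply, Jh, Matrix.cons_val', Matrix.cons_val_zero, Matrix.cons_val_one,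
    Matrix.head_cons, Matrix.empty_val', Matrix.cons_val_fin_one, Matrix.head_fin_const]
  exact scalar_det _ _ _ _ _ _ hs hr s2 r2 hlt

/-- invertible matrix as a continuous linear equivalence on the Euclidean plane -/
def mvCLE (M : Matrix (Fin 2) (Fin 2) ℝ) (h : Invertible M) : V ≃L[ℝ] V :=
  LinearEquiv.toContinuousLinearEquiv
    ((WithLp.linearEquiv 2 ℝ (Fin 2 → ℝ)).trans
      ((M.toLinearEquiv' h).trans (WithLp.linearEquiv 2 ℝ (Fin 2 → ℝ)).symm))

lemma mvCLE_coe (M : Matrix (Fin 2) (Fin 2) ℝ) (h : Invertible M) :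
    ((mvCLE M h : V ≃L[ℝ] V) : V →L[ℝ] V) = mvL M := by
  refine ContinuousLinearMap.ext fun u => ?_
  show WithLp.toLp 2 (Matrix.toLin' M u) = WithLp.toLp 2 (M.mulVec u)
  exact congrArg _ (Matrix.toLin'_apply M u)

end Thm5

/-- **Theorem 5 (main result).** Under the avoidance hypothesis, the topological frontier of
the remainder set `S = {g(u) : ‖u‖ ≤ 1}` is contained in the image of the unit sphere. -/
theorem frontier_remainder_subset_sphere_image
    (a b : ℝ) (x : EuclideanSpace ℝ (Fin 2)) (E : Matrix (Fin 2) (Fin 2) ℝ)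
    (hE : 0 < E.det)
    (havoid : ∀ u : EuclideanSpace ℝ (Fin 2), ‖u‖ ≤ 1 →
      ¬((x + mv E u) 0 ≤ a ∧ (x + mv E u) 1 = b)) :
    frontier {y : EuclideanSpace ℝ (Fin 2) |
        ∃ u : EuclideanSpace ℝ (Fin 2), ‖u‖ ≤ 1 ∧ gRem a b x E u = y} ⊆
      {y : EuclideanSpace ℝ (Fin 2) |
        ∃ u : EuclideanSpace ℝ (Fin 2), ‖u‖ = 1 ∧ gRem a b x E u = y} := by
  intro y hy
  have hS : {y : Thm5.V | ∃ u : Thm5.V, ‖u‖ ≤ 1 ∧ gRem a b x E u = y}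
      = gRem a b x E '' Metric.closedBall 0 1 := by
    ext w
    simp only [Set.mem_image, Set.mem_setOf_eq, Metric.mem_closedBall, dist_zero_right]
  have hcont := Thm5.continuousOn_gRem a b x E havoid
  have hcomp : IsCompact (gRem a b x E '' Metric.closedBall 0 1) :=
    (isCompact_closedBall 0 1).image_of_continuousOn hcont
  have hyS : y ∈ {y : Thm5.V | ∃ u : Thm5.V, ‖u‖ ≤ 1 ∧ gRem a b x E u = y} := by
    have h2 := frontier_subset_closure hy
    rw [hS, hcomp.isClosed.closure_eq] at h2
    rw [hS]
    exact h2
  obtain ⟨u, hu, hgu⟩ := hyS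
  by_cases h1 : ‖u‖ = 1
  · exact ⟨u, h1, hgu⟩
  have hult : ‖u‖ < 1 := lt_of_le_of_ne hu h1
  have hx0 : ¬(x 0 ≤ a ∧ x 1 = b) := by
    have h0 := havoid 0 (by simp)
    rw [Thm5.mv_zero, add_zero] at h0
    exact h0
  have hxslit := Thm5.slit_of_avoid a b x hx0
  have hxne := Complex.slitPlane_ne_zero hxslit
  by_cases hy0 : y = 0
  · obtain ⟨u', hu', hg'⟩ := Thm5.exists_sphere_zero a b x E hE hxne
    exact ⟨u', hu', by rw [hg', hy0]⟩
  · exfalso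
    have hpslit := Thm5.slit_of_avoid a b (x + mv E u) (havoid u hu)
    have hpne := Complex.slitPlane_ne_zero hpslit
    have hs := Thm5.rr_pos a b x hxne
    have hr := Thm5.rr_pos a b (x + mv E u) hpne
    have hle := Thm5.cs_le (x 0 - a) (x 1 - b) ((x + mv E u) 0 - a) ((x + mv E u) 1 - b)
      (rr a b x) (rr a b (x + mv E u)) hs.le hr.le (Thm5.rr_sq a b x)
      (Thm5.rr_sq a b (x + mv E u))
    have hne : (x 0 - a) * ((x + mv E u) 0 - a) + (x 1 - b) * ((x + mv E u) 1 - b)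
        ≠ rr a b x * rr a b (x + mv E u) := by
      intro h
      exact hy0 (by rw [← hgu, Thm5.gRem_eq_zero a b x E u hxne hpne h])
    have hltw := lt_of_le_of_ne hle hne
    have hdetpos : 0 < ((Jh a b (x + mv E u) - Jh a b x) * E).det := by
      rw [Matrix.det_mul]
      exact mul_pos (Thm5.det_sub_pos a b x (x + mv E u) hxne hpne hltw) hE
    have hinv : Invertible ((Jh a b (x + mv E u) - Jh a b x) * E) :=
      Matrix.invertibleOfIsUnitDet _ (isUnit_iff_ne_zero.2 (ne_of_gt hdetpos))
    have hstrict := Thm5.hasStrict_gRem a b x E u hpslit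
    have hstrict' : HasStrictFDerivAt (gRem a b x E)
        ((Thm5.mvCLE _ hinv : Thm5.V ≃L[ℝ] Thm5.V) : Thm5.V →L[ℝ] Thm5.V) u := by
      rw [Thm5.mvCLE_coe]
      exact hstrict
    have hmap := hstrict'.map_nhds_eq_of_equiv
    have hmem : {y : Thm5.V | ∃ u : Thm5.V, ‖u‖ ≤ 1 ∧ gRem a b x E u = y} ∈ nhds y := by
      rw [← hgu, ← hmap, Filter.mem_map]
      refine Filter.mem_of_superset
        (Metric.isOpen_ball.mem_nhds (x := u) (s := Metric.ball (0 : Thm5.V) 1) ?_) ?_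
      · exact mem_ball_zero_iff.2 hult
      · intro w hw
        exact ⟨w, (mem_ball_zero_iff.1 hw).le, rfl⟩
    exact hy.2 (mem_interior_iff_mem_nhds.2 hmem)
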